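/- For all real numbers θ₁ and θ₂, one has |v(θ₁) − v(θ₂)| ≥ min(‖θ₁ − θ₂‖, ‖θ₁ + θ₂‖)². -/

import Mathlib

open scoped InnerProductSpace

/-- `‖t‖`: the distance from a real number `t` to the nearest integer. -/
noncomputable def distToInt (t : ℝ) : ℝ := |t - round t|

/-- The ℓ¹ norm `‖x‖₁ = Σᵢ |xᵢ|` on `ℤ^d`. -/
def nrm1 {d : ℕ} (x : Fin d → ℤ) : ℤ := ∑ i, |x i|

/-- The dot product `x·ω` for `x ∈ ℤ^d`, `ω ∈ ℝ^d`. -/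
noncomputable def dotw {d : ℕ} (x : Fin d → ℤ) (ω : Fin d → ℝ) : ℝ := ∑ i, (x i : ℝ) * ω i

/-- The ℓ¹ norm on `ℝ^d`. -/
noncomputable def nrm1R {d : ℕ} (x : Fin d → ℝ) : ℝ := ∑ i, |x i|

/-- The dot product on `ℝ^d`. -/
noncomputable def dotwR {d : ℕ} (x ω : Fin d → ℝ) : ℝ := ∑ i, x i * ω i

/-- The standing hypotheses on the `C²`-cosine like potential `v` with parameter `a`:
`v` is `C²`, even and `1`-periodic, `0` is a nondegenerate maximum, `1/2` is a nondegenerate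
minimum, these are the only critical points modulo `1`, `|v''| > 3` near `0` and `1/2`
(within distance `a`), and `|v'| > 3` away from `0` and `1/2`. -/
structure CosLike (v : ℝ → ℝ) (a : ℝ) : Prop where
  smooth : ContDiff ℝ 2 v
  even : ∀ θ, v (-θ) = v θ
  periodic : ∀ θ, v (θ + 1) = v θ
  a_pos : 0 < a
  a_lt : a < 1 / 10
  critMax : deriv v 0 = 0
  critMax' : deriv (deriv v) 0 < 0
  critMin : deriv v (1 / 2) = 0
  critMin' : 0 < deriv (deriv v) (1 / 2)
  onlyCrit : ∀ θ ∈ Set.Ico (0 : ℝ) 1, deriv v θ = 0 → θ = 0 ∨ θ = 1 / 2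
  deriv2_big : ∀ θ, (distToInt θ < a ∨ distToInt (θ - 1 / 2) < a) → 3 < |deriv (deriv v) θ|
  deriv_big : ∀ θ, a ≤ distToInt θ → a ≤ distToInt (θ - 1 / 2) → 3 < |deriv v θ|

/-- `M₁ = sup_θ max(|v(θ)|, |v'(θ)|, |v''(θ)|)`. -/
noncomputable def M1 (v : ℝ → ℝ) : ℝ :=
  ⨆ θ : ℝ, max |v θ| (max |deriv v θ| |deriv (deriv v) θ|)

/-- The finite-volume Schrödinger operator `H_Λ(θ) = ε Δ + v(θ + x·ω) δ_{x,y}` as a matrix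
indexed by a finite set `Λ ⊂ ℤ^d`. -/
noncomputable def Hmat {d : ℕ} (ε : ℝ) (v : ℝ → ℝ) (ω : Fin d → ℝ) (θ : ℝ)
    (Λ : Finset (Fin d → ℤ)) : Matrix Λ Λ ℝ :=
  Matrix.of fun x y =>
    if nrm1 (x.1 - y.1) = 1 then ε
    else if x = y then v (θ + dotw x.1 ω) else 0

/-- The discrete ℓ¹-ball `{x ∈ ℤ^d : ‖x − c‖₁ ≤ r}` as a `Finset`. -/
noncomputable def ball1 {d : ℕ} (c : Fin d → ℤ) (r : ℝ) : Finset (Fin d → ℤ) :=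
  (Finset.Icc (fun i => c i - ⌈r⌉) (fun i => c i + ⌈r⌉)).filter
    fun x => ((nrm1 (x - c) : ℤ) : ℝ) ≤ r

/-- The discrete ℓ¹-ball around a (possibly non-integer) center `c ∈ ℝ^d`. -/
noncomputable def ballR {d : ℕ} (c : Fin d → ℝ) (r : ℝ) : Finset (Fin d → ℤ) :=
  (Finset.Icc (fun i => ⌊c i - r⌋ - 1) (fun i => ⌈c i + r⌉ + 1)).filter
    fun x => nrm1R (fun i => (x i : ℝ) - c i) ≤ r

/-- The nearest neighbours of `x` in `ℤ^d`. -/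
noncomputable def nbrs {d : ℕ} (x : Fin d → ℤ) : Finset (Fin d → ℤ) :=
  (Finset.Icc (fun i => x i - 1) (fun i => x i + 1)).filter fun y => nrm1 (y - x) = 1

/-- `δ₀ = ε₀^{1/20}`. -/
noncomputable def delta0 (ε₀ : ℝ) : ℝ := ε₀ ^ ((1 : ℝ) / 20)

section St0Aux

lemma st0_d_half {x : ℝ} (h : |x| ≤ 1/2) : distToInt x = |x| := by
  rcases lt_or_ge x (1/2) with hx | hx
  · have h0 : round x = 0 := by
      rw [round_eq]
      have := abs_le.mp h
      exact Int.floor_eq_zero_iff.mpr ⟨by linarith, by linarith⟩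
    simp [distToInt, h0]
  · have hx2 : x = 1/2 := le_antisymm (abs_le.mp h).2 hx
    subst hx2
    norm_num [distToInt, round_eq]

lemma st0_d_addInt (x : ℝ) (n : ℤ) : distToInt (x + n) = distToInt x := by
  unfold distToInt
  rw [round_add_intCast]
  push_cast
  ring_nf

variable {v : ℝ → ℝ} {a : ℝ}

lemma st0_diff (hv : CosLike v a) : Differentiable ℝ v := by
  have h := hv.smooth
  exact h.differentiable (by norm_num)

lemma st0_cd1 (hv : CosLike v a) : ContDiff ℝ 1 (deriv v) := by
  have h : ContDiff ℝ (1 + 1 : ℕ) v := by exact_mod_cast hv.smooth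
  exact (contDiff_succ_iff_deriv.mp h).2.2

lemma st0_diff' (hv : CosLike v a) : Differentiable ℝ (deriv v) :=
  (st0_cd1 hv).differentiable one_ne_zero

lemma st0_cont'' (hv : CosLike v a) : Continuous (deriv (deriv v)) :=
  (contDiff_one_iff_deriv.mp (st0_cd1 hv)).2

/-- Sign propagation: continuous, |f| > 3 on [x,y], negative at left end ⇒ < -3 on [x,y]. -/
lemma st0_sign_neg {f : ℝ → ℝ} (hf : Continuous f) {x y : ℝ} (hxy : x ≤ y)
    (hbig : ∀ t ∈ Set.Icc x y, 3 < |f t|) (hneg : f x < 0) :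
    ∀ t ∈ Set.Icc x y, f t < -3 := by
  intro t ht
  have h3 := hbig t ht
  rcases lt_or_ge (f t) 0 with h | h
  · rw [abs_of_neg h] at h3; linarith
  · exfalso
    have hsub : Set.Icc (f x) (f t) ⊆ f '' Set.Icc x t :=
      intermediate_value_Icc ht.1 hf.continuousOn
    obtain ⟨z, hz, hz0⟩ := hsub ⟨le_of_lt hneg, h⟩
    have := hbig z ⟨hz.1, hz.2.trans ht.2⟩
    rw [hz0] at this
    simp at this; linarith

lemma st0_sign_pos {f : ℝ → ℝ} (hf : Continuous f) {x y : ℝ}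
    (hbig : ∀ t ∈ Set.Icc x y, 3 < |f t|) (hpos : 0 < f y) :
    ∀ t ∈ Set.Icc x y, 3 < f t := by
  intro t ht
  have h3 := hbig t ht
  rcases lt_or_ge 0 (f t) with h | h
  · rwa [abs_of_pos h] at h3
  · exfalso
    have hsub : Set.Icc (f t) (f y) ⊆ f '' Set.Icc t y :=
      intermediate_value_Icc ht.2 hf.continuousOn
    obtain ⟨z, hz, hz0⟩ := hsub ⟨h, le_of_lt hpos⟩
    have := hbig z ⟨ht.1.trans hz.1, hz.2⟩
    rw [hz0] at this
    simp at this; linarith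

lemma st0_vpp_neg (hv : CosLike v a) : ∀ θ, 0 ≤ θ → θ < a → deriv (deriv v) θ < -3 := by
  intro θ h0 hθ
  have ha2 : a < 1/2 := by linarith [hv.a_lt]
  refine st0_sign_neg (st0_cont'' hv) h0 ?_ hv.critMax' θ ⟨h0, le_refl θ⟩
  intro t ht
  refine hv.deriv2_big t (Or.inl ?_)
  rw [st0_d_half (by rw [abs_of_nonneg ht.1]; linarith [ht.2]), abs_of_nonneg ht.1]
  linarith [ht.2]

lemma st0_vpp_pos (hv : CosLike v a) : ∀ θ, 1/2 - a < θ → θ ≤ 1/2 → 3 < deriv (deriv v) θ := by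
  intro θ h1 h2
  have ha2 : a < 1/2 := by linarith [hv.a_lt]
  have hM : 3 < deriv (deriv v) (1/2) := by
    have := hv.deriv2_big (1/2) (Or.inr (by norm_num [distToInt]; linarith [hv.a_pos]))
    rwa [abs_of_pos hv.critMin'] at this
  refine st0_sign_pos (st0_cont'' hv) ?_ (by linarith) θ ⟨le_refl θ, h2⟩
  intro t ht
  refine hv.deriv2_big t (Or.inr ?_)
  have habs : |t - 1/2| ≤ 1/2 := by rw [abs_le]; constructor <;> linarith [ht.1, ht.2]
  rw [st0_d_half habs, abs_lt]
  constructor <;> linarith [ht.1, ht.2, hv.a_pos]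

lemma st0_vp_le0 (hv : CosLike v a) : ∀ θ, 0 ≤ θ → θ ≤ a → deriv v θ ≤ -3 * θ := by
  intro θ h0 hθ
  set G : ℝ → ℝ := fun x => deriv v x + 3 * x with hG
  have hGd : Differentiable ℝ G := (st0_diff' hv).add (by fun_prop)
  have hGderiv : ∀ t, deriv G t = deriv (deriv v) t + 3 := by
    intro t
    have h1 := ((st0_diff' hv) t).hasDerivAt
    have h2 : HasDerivAt (fun x : ℝ => 3 * x) 3 t := by
      simpa using (hasDerivAt_id t).const_mul 3
    exact (h1.add h2).deriv
  have hanti : AntitoneOn G (Set.Icc 0 a) := by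
    refine antitoneOn_of_deriv_nonpos (convex_Icc 0 a) hGd.continuous.continuousOn
      (hGd.differentiableOn) ?_
    intro t ht
    rw [interior_Icc] at ht
    rw [hGderiv]
    have := st0_vpp_neg hv t (le_of_lt ht.1) ht.2
    linarith
  have := hanti ⟨le_refl 0, le_of_lt hv.a_pos⟩ ⟨h0, hθ⟩ h0
  simp only [hG] at this
  rw [hv.critMax] at this
  linarith

lemma st0_vp_le12 (hv : CosLike v a) : ∀ θ, 1/2 - a ≤ θ → θ ≤ 1/2 → deriv v θ ≤ 3 * θ - 3/2 := by
  intro θ h0 hθ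
  set G : ℝ → ℝ := fun x => deriv v x - 3 * x with hG
  have hGd : Differentiable ℝ G := (st0_diff' hv).sub (by fun_prop)
  have hGderiv : ∀ t, deriv G t = deriv (deriv v) t - 3 := by
    intro t
    have h1 := ((st0_diff' hv) t).hasDerivAt
    have h2 : HasDerivAt (fun x : ℝ => 3 * x) 3 t := by
      simpa using (hasDerivAt_id t).const_mul 3
    exact (h1.sub h2).deriv
  have hmono : MonotoneOn G (Set.Icc (1/2 - a) (1/2)) := by
    refine monotoneOn_of_deriv_nonneg (convex_Icc _ _) hGd.continuous.continuousOn
      (hGd.differentiableOn) ?_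
    intro t ht
    rw [interior_Icc] at ht
    rw [hGderiv]
    have := st0_vpp_pos hv t ht.1 (le_of_lt ht.2)
    linarith
  have := hmono ⟨h0, hθ⟩ ⟨by linarith [hv.a_pos], le_refl _⟩ hθ
  simp only [hG] at this
  rw [hv.critMin] at this
  linarith

lemma st0_vp_mid (hv : CosLike v a) : ∀ θ, a ≤ θ → θ ≤ 1/2 - a → deriv v θ ≤ -3 := by
  intro θ h0 hθ
  have ha := hv.a_pos
  have ha2 : a < 1/10 := hv.a_lt
  have hanchor : deriv v a < 0 := by
    have := st0_vp_le0 hv a (le_of_lt ha) (le_refl a)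
    linarith
  refine le_of_lt (st0_sign_neg (st0_diff' hv).continuous h0 ?_ hanchor θ ⟨h0, le_refl θ⟩)
  intro t ht
  have ht1 : a ≤ t := ht.1
  have ht2 : t ≤ 1/2 - a := ht.2.trans hθ
  refine hv.deriv_big t ?_ ?_
  · rw [st0_d_half (by rw [abs_of_nonneg (by linarith)]; linarith), abs_of_nonneg (by linarith)]
    exact ht1
  · rw [st0_d_half (by rw [abs_of_nonpos (by linarith)]; linarith), abs_of_nonpos (by linarith)]
    linarith

lemma st0_piece1 (hv : CosLike v a) : ∀ t₁ t₂, 0 ≤ t₁ → t₁ ≤ t₂ → t₂ ≤ a →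
    3/2 * (t₂^2 - t₁^2) ≤ v t₁ - v t₂ := by
  intro t₁ t₂ h0 h12 h2
  set G : ℝ → ℝ := fun x => v x + 3/2 * x^2 with hG
  have hGd : Differentiable ℝ G := (st0_diff hv).add (by fun_prop)
  have hGderiv : ∀ t, deriv G t = deriv v t + 3 * t := by
    intro t
    have h1 := ((st0_diff hv) t).hasDerivAt
    have h2 : HasDerivAt (fun x : ℝ => 3/2 * x^2) (3 * t) t := by
      have := (hasDerivAt_pow 2 t).const_mul (3/2 : ℝ)
      simpa using this.congr_deriv (by ring)
    exact (h1.add h2).deriv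
  have hanti : AntitoneOn G (Set.Icc 0 a) := by
    refine antitoneOn_of_deriv_nonpos (convex_Icc 0 a) hGd.continuous.continuousOn
      hGd.differentiableOn ?_
    intro t ht
    rw [interior_Icc] at ht
    rw [hGderiv]
    have := st0_vp_le0 hv t (le_of_lt ht.1) (le_of_lt ht.2)
    linarith
  have := hanti ⟨h0, h12.trans h2⟩ ⟨h0.trans h12, h2⟩ h12
  simp only [hG] at this
  linarith

lemma st0_piece2 (hv : CosLike v a) : ∀ t₁ t₂, a ≤ t₁ → t₁ ≤ t₂ → t₂ ≤ 1/2 - a →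
    3 * (t₂ - t₁) ≤ v t₁ - v t₂ := by
  intro t₁ t₂ h0 h12 h2
  set G : ℝ → ℝ := fun x => v x + 3 * x with hG
  have hGd : Differentiable ℝ G := (st0_diff hv).add (by fun_prop)
  have hGderiv : ∀ t, deriv G t = deriv v t + 3 := by
    intro t
    have h1 := ((st0_diff hv) t).hasDerivAt
    have h2 : HasDerivAt (fun x : ℝ => 3 * x) 3 t := by
      simpa using (hasDerivAt_id t).const_mul 3
    exact (h1.add h2).deriv
  have hanti : AntitoneOn G (Set.Icc a (1/2 - a)) := by
    refine antitoneOn_of_deriv_nonpos (convex_Icc _ _) hGd.continuous.continuousOn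
      hGd.differentiableOn ?_
    intro t ht
    rw [interior_Icc] at ht
    rw [hGderiv]
    have := st0_vp_mid hv t (le_of_lt ht.1) (le_of_lt ht.2)
    linarith
  have := hanti ⟨h0, h12.trans h2⟩ ⟨h0.trans h12, h2⟩ h12
  simp only [hG] at this
  linarith

lemma st0_piece3 (hv : CosLike v a) : ∀ t₁ t₂, 1/2 - a ≤ t₁ → t₁ ≤ t₂ → t₂ ≤ 1/2 →
    3/2 * ((1/2 - t₁)^2 - (1/2 - t₂)^2) ≤ v t₁ - v t₂ := by
  intro t₁ t₂ h0 h12 h2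
  set G : ℝ → ℝ := fun x => v x - 3/2 * x^2 + 3/2 * x with hG
  have hGd : Differentiable ℝ G := ((st0_diff hv).sub (by fun_prop)).add (by fun_prop)
  have hGderiv : ∀ t, deriv G t = deriv v t - 3 * t + 3/2 := by
    intro t
    have h1 := ((st0_diff hv) t).hasDerivAt
    have h2 : HasDerivAt (fun x : ℝ => 3/2 * x^2) (3 * t) t := by
      have := (hasDerivAt_pow 2 t).const_mul (3/2 : ℝ)
      simpa using this.congr_deriv (by ring)
    have h3 : HasDerivAt (fun x : ℝ => 3/2 * x) (3/2) t := by
      simpa using (hasDerivAt_id t).const_mul (3/2 : ℝ)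
    exact ((h1.sub h2).add h3).deriv
  have hanti : AntitoneOn G (Set.Icc (1/2 - a) (1/2)) := by
    refine antitoneOn_of_deriv_nonpos (convex_Icc _ _) hGd.continuous.continuousOn
      hGd.differentiableOn ?_
    intro t ht
    rw [interior_Icc] at ht
    rw [hGderiv]
    have := st0_vp_le12 hv t (le_of_lt ht.1) (le_of_lt ht.2)
    linarith
  have := hanti ⟨h0, h12.trans h2⟩ ⟨h0.trans h12, h2⟩ h12
  simp only [hG] at this
  nlinarith [this]

lemma st0_key (hv : CosLike v a) : ∀ t₁ t₂, 0 ≤ t₁ → t₁ ≤ t₂ → t₂ ≤ 1/2 →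
    (t₂ - t₁)^2 ≤ v t₁ - v t₂ := by
  intro t₁ t₂ h0 h12 h2
  have ha := hv.a_pos
  have ha10 := hv.a_lt
  rcases le_or_gt t₂ a with hc1 | hc1
  · have := st0_piece1 hv t₁ t₂ h0 h12 hc1
    nlinarith
  rcases le_or_gt (1/2 - a) t₁ with hc2 | hc2
  · have := st0_piece3 hv t₁ t₂ hc2 h12 h2
    nlinarith
  rcases le_or_gt a t₁ with hd1 | hd1 <;> rcases le_or_gt t₂ (1/2 - a) with hd2 | hd2
  · -- both in middle
    have := st0_piece2 hv t₁ t₂ hd1 h12 hd2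
    nlinarith
  · -- t₁ in middle, t₂ near 1/2
    have hA := st0_piece2 hv t₁ (1/2 - a) hd1 (by linarith) (le_refl _)
    have hB := st0_piece3 hv (1/2 - a) t₂ (le_refl _) (by linarith) h2
    nlinarith
  · -- t₁ near 0, t₂ in middle
    have hA := st0_piece1 hv t₁ a h0 (le_of_lt hd1) (le_refl _)
    have hB := st0_piece2 hv a t₂ (le_refl _) (by linarith) hd2
    nlinarith
  · -- t₁ near 0, t₂ near 1/2
    have hA := st0_piece1 hv t₁ a h0 (le_of_lt hd1) (le_refl _)
    have hB := st0_piece2 hv a (1/2 - a) (le_refl _) (by linarith) (le_refl _)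
    have hC := st0_piece3 hv (1/2 - a) t₂ (le_refl _) (by linarith) h2
    nlinarith

lemma st0_v_int (hv : CosLike v a) (θ : ℝ) (n : ℤ) : v (θ + n) = v θ := by
  have hper : Function.Periodic v 1 := hv.periodic
  simpa using (hper.int_mul n) θ

lemma st0_v_dist (hv : CosLike v a) (θ : ℝ) : v θ = v (distToInt θ) := by
  have h1 : v θ = v (θ - round θ) := by
    have := st0_v_int hv (θ - round θ) (round θ)
    simpa using this
  rw [h1]
  unfold distToInt
  rcases le_or_gt 0 (θ - round θ) with h | h
  · rw [abs_of_nonneg h]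
  · rw [abs_of_neg h, ← hv.even (θ - round θ)]

lemma st0_min_le (θ₁ θ₂ : ℝ) :
    min (distToInt (θ₁ - θ₂)) (distToInt (θ₁ + θ₂)) ≤ |distToInt θ₁ - distToInt θ₂| := by
  set s₁ := θ₁ - round θ₁ with hs₁
  set s₂ := θ₂ - round θ₂ with hs₂
  have hb₁ : |s₁| ≤ 1/2 := abs_sub_round θ₁
  have hb₂ : |s₂| ≤ 1/2 := abs_sub_round θ₂
  have hd₁ : distToInt θ₁ = |s₁| := rfl
  have hd₂ : distToInt θ₂ = |s₂| := rfl
  have e1 : distToInt (θ₁ - θ₂) = distToInt (s₁ - s₂) := by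
    have h : θ₁ - θ₂ = (s₁ - s₂) + ((round θ₁ - round θ₂ : ℤ) : ℝ) := by push_cast; ring
    rw [h, st0_d_addInt]
  have e2 : distToInt (θ₁ + θ₂) = distToInt (s₁ + s₂) := by
    have h : θ₁ + θ₂ = (s₁ + s₂) + ((round θ₁ + round θ₂ : ℤ) : ℝ) := by push_cast; ring
    rw [h, st0_d_addInt]
  have hb₁' := abs_le.mp hb₁
  have hb₂' := abs_le.mp hb₂
  rw [hd₁, hd₂, e1, e2]
  rcases le_or_gt 0 s₁ with h1 | h1 <;> rcases le_or_gt 0 s₂ with h2 | h2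
  · rw [abs_of_nonneg h1, abs_of_nonneg h2]
    have : distToInt (s₁ - s₂) = |s₁ - s₂| :=
      st0_d_half (abs_le.mpr ⟨by linarith [hb₁'.1, hb₂'.2], by linarith [hb₁'.2, hb₂'.1]⟩)
    rw [this] at *
    exact min_le_left _ _
  · rw [abs_of_nonneg h1, abs_of_neg h2]
    have : distToInt (s₁ + s₂) = |s₁ + s₂| :=
      st0_d_half (abs_le.mpr ⟨by linarith [hb₁'.1, hb₂'.1], by linarith [hb₁'.2, hb₂'.2]⟩)
    rw [this] at *
    have heq : |s₁ + s₂| = |s₁ - -s₂| := by ring_nf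
    rw [heq] at *
    exact min_le_right _ _
  · rw [abs_of_neg h1, abs_of_nonneg h2]
    have : distToInt (s₁ + s₂) = |s₁ + s₂| :=
      st0_d_half (abs_le.mpr ⟨by linarith [hb₁'.1, hb₂'.1], by linarith [hb₁'.2, hb₂'.2]⟩)
    rw [this] at *
    have heq : |s₁ + s₂| = |-s₁ - s₂| := by rw [abs_sub_comm]; ring_nf
    rw [heq] at *
    exact min_le_right _ _
  · rw [abs_of_neg h1, abs_of_neg h2]
    have : distToInt (s₁ - s₂) = |s₁ - s₂| :=
      st0_d_half (abs_le.mpr ⟨by linarith [hb₁'.1, hb₂'.2], by linarith [hb₁'.2, hb₂'.1]⟩)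
    rw [this] at *
    have heq : |s₁ - s₂| = |-s₁ - -s₂| := by rw [abs_sub_comm]; ring_nf
    rw [heq] at *
    exact min_le_left _ _

end St0Aux

/-- For all real numbers `θ₁` and `θ₂`,
`|v(θ₁) − v(θ₂)| ≥ min(‖θ₁ − θ₂‖, ‖θ₁ + θ₂‖)²`. -/
theorem statement0 (v : ℝ → ℝ) (a : ℝ) (hv : CosLike v a) :
    ∀ θ₁ θ₂ : ℝ,
      min (distToInt (θ₁ - θ₂)) (distToInt (θ₁ + θ₂)) ^ 2 ≤ |v θ₁ - v θ₂| := by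
  intro θ₁ θ₂
  set t₁ := distToInt θ₁ with ht₁
  set t₂ := distToInt θ₂ with ht₂
  have ht₁0 : 0 ≤ t₁ := abs_nonneg _
  have ht₂0 : 0 ≤ t₂ := abs_nonneg _
  have ht₁half : t₁ ≤ 1/2 := abs_sub_round θ₁
  have ht₂half : t₂ ≤ 1/2 := abs_sub_round θ₂
  have hvv : |v θ₁ - v θ₂| = |v t₁ - v t₂| := by
    rw [st0_v_dist hv θ₁, st0_v_dist hv θ₂]
  have hmin : min (distToInt (θ₁ - θ₂)) (distToInt (θ₁ + θ₂)) ≤ |t₁ - t₂| := st0_min_le θ₁ θ₂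
  have hmin0 : 0 ≤ min (distToInt (θ₁ - θ₂)) (distToInt (θ₁ + θ₂)) :=
    le_min (abs_nonneg _) (abs_nonneg _)
  have hsq : min (distToInt (θ₁ - θ₂)) (distToInt (θ₁ + θ₂)) ^ 2 ≤ |t₁ - t₂| ^ 2 :=
    pow_le_pow_left₀ hmin0 hmin 2
  have hcore : |t₁ - t₂| ^ 2 ≤ |v t₁ - v t₂| := by
    rcases le_total t₁ t₂ with h | h
    · have hk := st0_key hv t₁ t₂ ht₁0 h ht₂half
      have : |t₁ - t₂| ^ 2 = (t₂ - t₁) ^ 2 := by rw [abs_sub_comm, sq_abs]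
      rw [this]
      calc (t₂ - t₁)^2 ≤ v t₁ - v t₂ := hk
        _ ≤ |v t₁ - v t₂| := le_abs_self _
    · have hk := st0_key hv t₂ t₁ ht₂0 h ht₁half
      have : |t₁ - t₂| ^ 2 = (t₁ - t₂) ^ 2 := sq_abs _
      rw [this]
      calc (t₁ - t₂)^2 = (t₁ - t₂)^2 := rfl
        _ ≤ v t₂ - v t₁ := by nlinarith [hk]
        _ ≤ |v t₁ - v t₂| := by rw [abs_sub_comm]; exact le_abs_self _
  rw [hvv]
  exact hsq.trans hcore
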